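/- Let X be a real Banach space and let {x^n_k : n ≥ 0, 1 ≤ k ≤ 2^n} be a bounded tree in X with difference system {d_j}. Then there is a unique bounded linear operator T : L¹[0,1] → X such that T h̃_j = d_j for every j ≥ 1, where {h̃_j} is the standard Haar system; moreover T(2^n 1_{I^n_k}) = x^n_k for all n ≥ 0 and 1 ≤ k ≤ 2^n, and ‖T‖ = sup_{n,k} ‖x^n_k‖. -/

import Mathlib

open MeasureTheory Filter Topology
open scoped ENNReal NNReal

noncomputable section

/-- Lebesgue measure restricted to `[0,1]`. -/
abbrev μ01 : Measure ℝ := MeasureTheory.volume.restrict (Set.Icc 0 1)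

/-- The space `L¹[0,1]`. -/
abbrev L1 : Type := Lp ℝ 1 μ01

lemma μ01_ne_top (s : Set ℝ) : μ01 s ≠ ⊤ := by
  refine ne_of_lt (lt_of_le_of_lt (measure_mono (Set.subset_univ s)) ?_)
  rw [Measure.restrict_apply_univ, Real.volume_Icc]
  norm_num

open Classical in
/-- The indicator function `1ₛ` as an element of `L¹[0,1]`. -/
def indL1 (s : Set ℝ) : L1 :=
  if h : MeasurableSet s then indicatorConstLp 1 h (μ01_ne_top s) (1:ℝ) else 0

/-- An operator `T : L¹[0,1] → Y` is completely continuous if it maps weakly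
convergent sequences to norm convergent sequences. -/
def CompletelyContinuous {Y : Type*} [NormedAddCommGroup Y] [NormedSpace ℝ Y]
    (T : L1 →L[ℝ] Y) : Prop :=
  ∀ (f : ℕ → L1) (f₀ : L1),
    (∀ φ : L1 →L[ℝ] ℝ, Tendsto (fun t => φ (f t)) atTop (𝓝 (φ f₀))) →
    Tendsto (fun t => T (f t)) atTop (𝓝 (T f₀))

/-- The dyadic interval `I n k = [(k-1)/2^n, k/2^n)`. -/
def dyadicI (n k : ℕ) : Set ℝ := Set.Ico (((k : ℝ) - 1) / 2 ^ n) ((k : ℝ) / 2 ^ n)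

/-- The standard (L¹-normalized) Haar system on `[0,1]`: `h̃ 1 = 1_{[0,1]}` and
`h̃ (2^n + k) = 2^n (1_{I^{n+1}_{2k-1}} - 1_{I^{n+1}_{2k}})` for `n ≥ 0`, `1 ≤ k ≤ 2^n`
(for `j ≥ 2` we have `j = 2^n + k` with `n = Nat.log2 (j-1)`). -/
def stdHaar : ℕ → L1 := fun j =>
  if j = 1 then indL1 (Set.Icc 0 1)
  else
    let n := Nat.log2 (j - 1)
    let k := j - 2 ^ n
    (2 ^ n : ℝ) • (indL1 (dyadicI (n+1) (2*k-1)) - indL1 (dyadicI (n+1) (2*k)))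

lemma indL1_def {s : Set ℝ} (hs : MeasurableSet s) :
    indL1 s = indicatorConstLp 1 hs (μ01_ne_top s) (1:ℝ) := by
  simp [indL1, hs]

lemma indL1_coeFn {s : Set ℝ} (hs : MeasurableSet s) :
    (indL1 s : ℝ → ℝ) =ᵐ[μ01] s.indicator (fun _ => (1:ℝ)) := by
  rw [indL1_def hs]; exact indicatorConstLp_coeFn

lemma norm_indL1_sub_le {s t : Set ℝ} (hs : MeasurableSet s) (ht : MeasurableSet t) :
    ‖indL1 s - indL1 t‖ ≤ (μ01 (s \ t) + μ01 (t \ s)).toReal := by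
  have h1 : ((indL1 s - indL1 t : L1) : ℝ → ℝ) =ᵐ[μ01]
      fun a => s.indicator (fun _ => (1:ℝ)) a - t.indicator (fun _ => (1:ℝ)) a := by
    filter_upwards [Lp.coeFn_sub (indL1 s) (indL1 t), indL1_coeFn hs, indL1_coeFn ht]
      with a h h2 h3
    rw [h, Pi.sub_apply, h2, h3]
  rw [Lp.norm_def]
  have h2 : eLpNorm ((indL1 s - indL1 t : L1) : ℝ → ℝ) 1 μ01
      ≤ μ01 (s \ t) + μ01 (t \ s) := by
    rw [eLpNorm_congr_ae h1, eLpNorm_one_eq_lintegral_enorm]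
    have hb : ∀ a, (‖s.indicator (fun _ => (1:ℝ)) a - t.indicator (fun _ => (1:ℝ)) a‖₊ : ℝ≥0∞)
        ≤ (s \ t).indicator (fun _ => (1:ℝ≥0∞)) a + (t \ s).indicator (fun _ => (1:ℝ≥0∞)) a := by
      intro a
      by_cases has : a ∈ s <;> by_cases hat : a ∈ t <;>
        simp [Set.indicator_apply, has, hat, Set.mem_diff]
    calc (∫⁻ a, (‖s.indicator (fun _ => (1:ℝ)) a - t.indicator (fun _ => (1:ℝ)) a‖₊ : ℝ≥0∞) ∂μ01)
        ≤ ∫⁻ a, ((s \ t).indicator (fun _ => (1:ℝ≥0∞)) a + (t \ s).indicator (fun _ => (1:ℝ≥0∞)) a) ∂μ01 :=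
          lintegral_mono hb
      _ = μ01 (s \ t) + μ01 (t \ s) := by
          rw [lintegral_add_left ((measurable_const.indicator (hs.diff ht)))]
          rw [lintegral_indicator (hs.diff ht), lintegral_indicator (ht.diff hs)]
          simp
  exact ENNReal.toReal_mono (ENNReal.add_ne_top.mpr ⟨μ01_ne_top _, μ01_ne_top _⟩) h2

lemma indL1_congr {s t : Set ℝ} (hs : MeasurableSet s) (ht : MeasurableSet t)
    (h1 : μ01 (s \ t) = 0) (h2 : μ01 (t \ s) = 0) : indL1 s = indL1 t := by
  have := norm_indL1_sub_le hs ht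
  rw [h1, h2] at this
  have h0 : indL1 s - indL1 t = 0 := norm_le_zero_iff.mp (by simpa using this)
  exact sub_eq_zero.mp h0

lemma indL1_union {s t : Set ℝ} (hs : MeasurableSet s) (ht : MeasurableSet t)
    (hd : Disjoint s t) : indL1 (s ∪ t) = indL1 s + indL1 t := by
  rw [indL1_def (hs.union ht), indL1_def hs, indL1_def ht]
  rw [← indicatorConstLp_disjoint_union hs ht (μ01_ne_top s) (μ01_ne_top t) hd]

lemma dyadicI_meas (n k : ℕ) : MeasurableSet (dyadicI n k) := measurableSet_Ico

lemma dyadicI_subset {n k : ℕ} (hk1 : 1 ≤ k) (hk2 : k ≤ 2 ^ n) :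
    dyadicI n k ⊆ Set.Icc 0 1 := by
  intro y hy
  obtain ⟨h1, h2⟩ := hy
  have hk1' : (1:ℝ) ≤ (k:ℝ) := by exact_mod_cast hk1
  have hk2' : (k:ℝ) ≤ 2 ^ n := by exact_mod_cast hk2
  constructor
  · refine le_trans ?_ h1
    apply div_nonneg (by linarith) (by positivity)
  · refine le_of_lt (lt_of_lt_of_le h2 ?_)
    rw [div_le_one (by positivity)]
    exact hk2'

lemma μ01_dyadicI {n k : ℕ} (hk1 : 1 ≤ k) (hk2 : k ≤ 2 ^ n) :
    μ01 (dyadicI n k) = ENNReal.ofReal (((2:ℝ) ^ n)⁻¹) := by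
  rw [Measure.restrict_apply (dyadicI_meas n k),
    Set.inter_eq_self_of_subset_left (dyadicI_subset hk1 hk2)]
  rw [dyadicI, Real.volume_Ico]
  congr 1
  field_simp
  ring

lemma dyadicI_disjoint {n k j : ℕ} (h : k ≠ j) :
    Disjoint (dyadicI n k) (dyadicI n j) := by
  have key : ∀ a b : ℕ, a < b → Disjoint (dyadicI n a) (dyadicI n b) := by
    intro a b hab
    rw [dyadicI, dyadicI, Set.Ico_disjoint_Ico]
    have h1 : (a:ℝ) ≤ (b:ℝ) - 1 := by
      have : (a:ℝ) + 1 ≤ (b:ℝ) := by exact_mod_cast hab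
      linarith
    refine le_trans (min_le_left _ _) (le_trans ?_ (le_max_right _ _))
    exact (div_le_div_iff_of_pos_right (by positivity)).mpr h1
  rcases Nat.lt_or_ge k j with hlt | hge
  · exact key k j hlt
  · exact (key j k (by omega)).symm

lemma dyadicI_split {n k : ℕ} (hk1 : 1 ≤ k) :
    dyadicI n k = dyadicI (n+1) (2*k-1) ∪ dyadicI (n+1) (2*k) := by
  have h2k : ((2*k-1:ℕ):ℝ) = 2*(k:ℝ) - 1 := by
    have h : 1 ≤ 2*k := by omega
    push_cast [h]; ring
  have hp : (0:ℝ) < 2 ^ n := by positivity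
  have a1 : (2*(k:ℝ)-1-1)/2^(n+1) = ((k:ℝ)-1)/2^n := by field_simp; ring
  have a2 : (2*(k:ℝ))/2^(n+1) = ((k:ℝ))/2^n := by field_simp; ring
  have e1 : dyadicI (n+1) (2*k-1) = Set.Ico (((k:ℝ)-1)/2^n) ((2*(k:ℝ)-1)/2^(n+1)) := by
    rw [dyadicI, h2k, a1]
  have e2 : dyadicI (n+1) (2*k) = Set.Ico ((2*(k:ℝ)-1)/2^(n+1)) ((k:ℝ)/2^n) := by
    rw [dyadicI]
    push_cast
    rw [a2]
  rw [e1, e2, Set.Ico_union_Ico_eq_Ico, dyadicI]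
  · rw [div_le_div_iff₀ (by positivity) (by positivity)]
    ring_nf
    nlinarith
  · rw [div_le_div_iff₀ (by positivity) (by positivity)]
    ring_nf
    nlinarith

lemma indL1_dyadic_split {n k : ℕ} (hk1 : 1 ≤ k) :
    indL1 (dyadicI n k) = indL1 (dyadicI (n+1) (2*k-1)) + indL1 (dyadicI (n+1) (2*k)) := by
  rw [dyadicI_split hk1]
  exact indL1_union (dyadicI_meas _ _) (dyadicI_meas _ _) (dyadicI_disjoint (by omega))

lemma dyadicI_iUnion (n : ℕ) : (⋃ k ∈ Finset.Icc 1 (2^n), dyadicI n k) = Set.Ico 0 1 := by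
  ext y
  simp only [Set.mem_iUnion, Finset.mem_Icc, Set.mem_Ico]
  constructor
  · rintro ⟨k, ⟨hk1, hk2⟩, h1, h2⟩
    have hmem := dyadicI_subset hk1 hk2 (Set.mem_Ico.mpr ⟨h1, h2⟩)
    have hk2' : (k:ℝ) ≤ 2 ^ n := by exact_mod_cast hk2
    exact ⟨hmem.1, lt_of_lt_of_le h2 (by rw [div_le_one (by positivity)]; exact hk2')⟩
  · rintro ⟨h0, h1⟩
    have hy2 : 0 ≤ y * 2^n := by positivity
    have hm0 : 0 ≤ ⌊y * 2^n⌋ := Int.floor_nonneg.mpr hy2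
    have hmlt : ⌊y * 2^n⌋ < (2^n : ℤ) := by
      apply Int.floor_lt.mpr
      push_cast
      nlinarith [pow_pos (zero_lt_two (α := ℝ)) n]
    have h5 : (⌊y * 2^n⌋.toNat : ℤ) < (2^n : ℤ) := by rwa [Int.toNat_of_nonneg hm0]
    have hr : ((⌊y * 2^n⌋.toNat : ℕ) : ℝ) = ((⌊y * 2^n⌋ : ℤ) : ℝ) := by
      exact_mod_cast congrArg (fun z : ℤ => (z : ℝ)) (Int.toNat_of_nonneg hm0)
    refine ⟨⌊y * 2^n⌋.toNat + 1, ⟨by omega, by exact_mod_cast h5⟩, ?_, ?_⟩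
    · rw [div_le_iff₀ (by positivity)]
      push_cast
      rw [hr]
      have := Int.floor_le (y * 2^n)
      linarith
    · rw [lt_div_iff₀ (by positivity)]
      push_cast
      rw [hr]
      have := Int.lt_floor_add_one (y * 2^n)
      linarith

lemma L1.int (f : L1) : Integrable (f : ℝ → ℝ) μ01 := L1.integrable_coeFn f

def setIntCLM (s : Set ℝ) : L1 →L[ℝ] ℝ :=
  LinearMap.mkContinuous
    { toFun := fun f => ∫ a in s, f a ∂μ01
      map_add' := fun f g => by
        show (∫ a in s, ((f + g : L1) : ℝ → ℝ) a ∂μ01) = _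
        rw [integral_congr_ae (ae_restrict_of_ae (Lp.coeFn_add f g))]
        exact integral_add (L1.int f).integrableOn (L1.int g).integrableOn
      map_smul' := fun c f => by
        show (∫ a in s, ((c • f : L1) : ℝ → ℝ) a ∂μ01) = _
        rw [integral_congr_ae (ae_restrict_of_ae (Lp.coeFn_smul c f))]
        simpa using integral_smul c (fun a => f a) }
    1
    (fun f => by
      simp only [LinearMap.coe_mk, AddHom.coe_mk, one_mul]
      calc ‖∫ a in s, f a ∂μ01‖ ≤ ∫ a in s, ‖f a‖ ∂μ01 := norm_integral_le_integral_norm _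
        _ ≤ ∫ a, ‖f a‖ ∂μ01 := by
            apply integral_mono_measure Measure.restrict_le_self
            · exact Eventually.of_forall (fun a => norm_nonneg _)
            · exact (L1.int f).norm
        _ = ‖f‖ := (L1.norm_eq_integral_norm f).symm)

lemma setIntCLM_apply (s : Set ℝ) (f : L1) : setIntCLM s f = ∫ a in s, f a ∂μ01 := rfl

lemma setIntCLM_ind {s t : Set ℝ} (hs : MeasurableSet s) (ht : MeasurableSet t) :
    setIntCLM s (indL1 t) = (μ01 (t ∩ s)).toReal := by
  rw [setIntCLM_apply, integral_congr_ae (ae_restrict_of_ae (indL1_coeFn ht))]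
  rw [integral_indicator_const (1:ℝ) ht]
  rw [measureReal_def, Measure.restrict_apply ht]
  simp

-- value of setIntCLM on same-level dyadic indicator
lemma setIntCLM_dyadic {n k j : ℕ} (hk1 : 1 ≤ k) (hk2 : k ≤ 2^n) :
    setIntCLM (dyadicI n j) (indL1 (dyadicI n k))
      = if k = j then ((2:ℝ)^n)⁻¹ else 0 := by
  rw [setIntCLM_ind (dyadicI_meas n j) (dyadicI_meas n k)]
  by_cases h : k = j
  · subst h
    rw [Set.inter_self, μ01_dyadicI hk1 hk2, if_pos rfl]
    rw [ENNReal.toReal_ofReal (by positivity)]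
  · rw [if_neg h, Set.disjoint_iff_inter_eq_empty.mp (dyadicI_disjoint h)]
    simp

lemma μ01_restrict_Ico : μ01.restrict (Set.Ico 0 1) = μ01 := by
  show (volume.restrict (Set.Icc 0 1)).restrict (Set.Ico 0 1) = _
  rw [Measure.restrict_restrict measurableSet_Ico,
    Set.inter_eq_self_of_subset_left Set.Ico_subset_Icc_self]
  exact (Measure.restrict_congr_set MeasureTheory.Ico_ae_eq_Icc)

lemma sum_setIntegral (n : ℕ) (g : ℝ → ℝ) (hg : Integrable g μ01) :
    ∑ k ∈ Finset.Icc 1 (2^n), ∫ a in dyadicI n k, g a ∂μ01 = ∫ a, g a ∂μ01 := by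
  rw [← integral_biUnion_finset (Finset.Icc 1 (2^n)) (fun k _ => dyadicI_meas n k)
      (fun k _ j _ hkj => dyadicI_disjoint hkj) (fun k _ => hg.integrableOn)]
  rw [dyadicI_iUnion n]
  rw [show (∫ a in Set.Ico (0:ℝ) 1, g a ∂μ01) = ∫ a, g a ∂(μ01.restrict (Set.Ico 0 1)) from rfl,
    μ01_restrict_Ico]

section Tn
variable {X : Type*} [NormedAddCommGroup X] [NormedSpace ℝ X]

def Tn (x : ℕ → ℕ → X) (n : ℕ) : L1 →L[ℝ] X :=
  ∑ k ∈ Finset.Icc 1 (2^n), (setIntCLM (dyadicI n k)).smulRight (x n k)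

lemma Tn_apply (x : ℕ → ℕ → X) (n : ℕ) (f : L1) :
    Tn x n f = ∑ k ∈ Finset.Icc 1 (2^n), (setIntCLM (dyadicI n k) f) • x n k := by
  simp [Tn, ContinuousLinearMap.sum_apply]

lemma Tn_ind_same (x : ℕ → ℕ → X) {n j : ℕ} (hj1 : 1 ≤ j) (hj2 : j ≤ 2^n) :
    Tn x n (indL1 (dyadicI n j)) = ((2:ℝ)^n)⁻¹ • x n j := by
  rw [Tn_apply]
  rw [Finset.sum_eq_single j]
  · rw [setIntCLM_dyadic hj1 hj2, if_pos rfl]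
  · intro k hk hkj
    rw [Finset.mem_Icc] at hk
    rw [setIntCLM_dyadic hj1 hj2, if_neg (Ne.symm hkj), zero_smul]
  · intro h
    exact absurd (Finset.mem_Icc.mpr ⟨hj1, hj2⟩) h

lemma Tn_ind (x : ℕ → ℕ → X)
    (htree : ∀ n k, 1 ≤ k → k ≤ 2 ^ n →
      x n k = (2⁻¹ : ℝ) • (x (n+1) (2*k-1) + x (n+1) (2*k)))
    (d : ℕ) : ∀ m j : ℕ, 1 ≤ j → j ≤ 2^m →
    Tn x (m + d) (indL1 (dyadicI m j)) = ((2:ℝ)^m)⁻¹ • x m j := by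
  induction d with
  | zero => intro m j h1 h2; exact Tn_ind_same x h1 h2
  | succ d ih =>
    intro m j h1 h2
    rw [indL1_dyadic_split h1, map_add]
    have e : m + (d + 1) = (m + 1) + d := by omega
    rw [e, ih (m+1) (2*j-1) (by omega) (by rw [pow_succ]; omega),
      ih (m+1) (2*j) (by omega) (by rw [pow_succ]; omega)]
    rw [htree m j h1 h2]
    have hc : ((2:ℝ)^(m+1))⁻¹ = (2^m)⁻¹ * 2⁻¹ := by rw [pow_succ, mul_inv]
    rw [hc, ← smul_smul, ← smul_smul]
    simp [smul_add]

lemma Tn_bound (x : ℕ → ℕ → X) (n : ℕ) (S : ℝ)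
    (hS : ∀ k, 1 ≤ k → k ≤ 2^n → ‖x n k‖ ≤ S) (f : L1) :
    ‖Tn x n f‖ ≤ S * ‖f‖ := by
  rw [Tn_apply]
  calc ‖∑ k ∈ Finset.Icc 1 (2^n), (setIntCLM (dyadicI n k) f) • x n k‖
      ≤ ∑ k ∈ Finset.Icc 1 (2^n), ‖(setIntCLM (dyadicI n k) f) • x n k‖ :=
        norm_sum_le _ _
    _ ≤ ∑ k ∈ Finset.Icc 1 (2^n), (∫ a in dyadicI n k, ‖f a‖ ∂μ01) * S := by
        apply Finset.sum_le_sum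
        intro k hk
        rw [Finset.mem_Icc] at hk
        rw [norm_smul]
        have h1 : ‖setIntCLM (dyadicI n k) f‖ ≤ ∫ a in dyadicI n k, ‖f a‖ ∂μ01 :=
          norm_integral_le_integral_norm _
        have h2 : (0:ℝ) ≤ ∫ a in dyadicI n k, ‖f a‖ ∂μ01 :=
          integral_nonneg (fun a => norm_nonneg _)
        exact mul_le_mul h1 (hS k hk.1 hk.2) (norm_nonneg _) h2
    _ = (∫ a, ‖f a‖ ∂μ01) * S := by
        rw [← Finset.sum_mul, sum_setIntegral n _ (L1.int f).norm]
    _ = ‖f‖ * S := by rw [← L1.norm_eq_integral_norm]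
    _ = S * ‖f‖ := mul_comm _ _

end Tn

def Gset : Set L1 := {f | ∃ n k : ℕ, 1 ≤ k ∧ k ≤ 2^n ∧ f = indL1 (dyadicI n k)}

def Vsub : Submodule ℝ L1 := (Submodule.span ℝ Gset).topologicalClosure

lemma μ01_le (s : Set ℝ) : μ01 s ≤ volume s := Measure.le_iff'.mp Measure.restrict_le_self s

lemma Vsub_closed : IsClosed (Vsub : Set L1) :=
  Submodule.isClosed_topologicalClosure _

lemma mem_V_gen {n k : ℕ} (h1 : 1 ≤ k) (h2 : k ≤ 2^n) : indL1 (dyadicI n k) ∈ Vsub :=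
  Submodule.le_topologicalClosure _ (Submodule.subset_span ⟨n, k, h1, h2, rfl⟩)

lemma indL1_empty : indL1 (∅ : Set ℝ) = 0 := by
  apply Lp.ext (μ := μ01)
  filter_upwards [indL1_coeFn MeasurableSet.empty, Lp.coeFn_zero ℝ 1 μ01] with a e1 e2
  rw [e1, e2]; simp

lemma indL1_null {s : Set ℝ} (hs : MeasurableSet s) (h : μ01 s = 0) : indL1 s = 0 := by
  rw [indL1_congr hs MeasurableSet.empty (by simpa using h) (by simp)]
  exact indL1_empty

lemma dyadicI_zero_one : dyadicI 0 1 = Set.Ico (0:ℝ) 1 := by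
  rw [dyadicI]; norm_num

lemma indL1_Icc_eq : indL1 (Set.Icc (0:ℝ) 1) = indL1 (dyadicI 0 1) := by
  rw [dyadicI_zero_one]
  apply indL1_congr measurableSet_Icc measurableSet_Ico
  · rw [Set.Icc_diff_Ico_same zero_le_one]
    apply le_antisymm _ (zero_le)
    calc μ01 {1} ≤ volume ({1} : Set ℝ) := μ01_le _
      _ = 0 := Real.volume_singleton
  · rw [Set.diff_eq_empty.mpr Set.Ico_subset_Icc_self]
    exact measure_empty

lemma mem_V_Icc : indL1 (Set.Icc (0:ℝ) 1) ∈ Vsub := by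
  rw [indL1_Icc_eq]; exact mem_V_gen le_rfl le_rfl

lemma norm_indL1_Ico0_le {c d : ℝ} (h : c ≤ d) :
    ‖indL1 (Set.Ico 0 d) - indL1 (Set.Ico 0 c)‖ ≤ d - c := by
  refine le_trans (norm_indL1_sub_le measurableSet_Ico measurableSet_Ico) ?_
  have h2 : Set.Ico (0:ℝ) c \ Set.Ico 0 d = ∅ :=
    Set.diff_eq_empty.mpr (Set.Ico_subset_Ico_right h)
  have h1 : μ01 (Set.Ico 0 d \ Set.Ico (0:ℝ) c) ≤ ENNReal.ofReal (d - c) := by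
    have hsub : Set.Ico (0:ℝ) d \ Set.Ico 0 c ⊆ Set.Ico c d := by
      rintro y ⟨⟨hy0, hyd⟩, hy⟩
      exact ⟨by by_contra hc; exact hy ⟨hy0, lt_of_not_ge hc⟩, hyd⟩
    calc μ01 (Set.Ico (0:ℝ) d \ Set.Ico 0 c) ≤ μ01 (Set.Ico c d) := measure_mono hsub
      _ ≤ volume (Set.Ico c d) := μ01_le _
      _ = ENNReal.ofReal (d - c) := Real.volume_Ico
  rw [h2]
  simp only [measure_empty, add_zero]
  calc (μ01 (Set.Ico 0 d \ Set.Ico (0:ℝ) c)).toReal ≤ (ENNReal.ofReal (d-c)).toReal :=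
        ENNReal.toReal_mono ENNReal.ofReal_ne_top h1
    _ = d - c := ENNReal.toReal_ofReal (by linarith)

lemma mem_V_Ico0 (m : ℕ) : ∀ l : ℕ, l ≤ 2^m → indL1 (Set.Ico 0 ((l:ℝ)/2^m)) ∈ Vsub := by
  intro l
  induction l with
  | zero => intro _; simp only [Nat.cast_zero, zero_div, Set.Ico_self]
            rw [indL1_empty]; exact zero_mem _
  | succ l ih =>
    intro hl
    have ha : dyadicI m (l+1) = Set.Ico ((l:ℝ)/2^m) (((l:ℝ)+1)/2^m) := by
      rw [dyadicI]
      push_cast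
      rw [show ((l:ℝ) + 1 - 1) = (l:ℝ) from by ring]
    have e : Set.Ico (0:ℝ) (((l:ℝ)+1)/2^m) = Set.Ico 0 ((l:ℝ)/2^m) ∪ dyadicI m (l+1) := by
      rw [ha, Set.Ico_union_Ico_eq_Ico (by positivity) (by gcongr <;> linarith)]
    have hcast : ((l+1:ℕ):ℝ) = (l:ℝ)+1 := by push_cast; ring
    rw [hcast, e, indL1_union measurableSet_Ico (dyadicI_meas _ _) ?_]
    · exact add_mem (ih (by omega)) (mem_V_gen (by omega) hl)
    · rw [ha, Set.Ico_disjoint_Ico]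
      exact le_trans (min_le_left _ _) (le_max_right _ _)

lemma mem_V_Ico (a b : ℝ) : indL1 (Set.Ico a b) ∈ Vsub := by
  by_cases hab : min b 1 ≤ max a 0
  · -- essentially null
    have hnull : μ01 (Set.Ico a b) = 0 := by
      rw [Measure.restrict_apply measurableSet_Ico]
      have hsub : Set.Ico a b ∩ Set.Icc 0 1 ⊆ ({1} : Set ℝ) := by
        rintro y ⟨⟨hya, hyb⟩, hy0, hy1⟩
        rcases le_max_iff.mp hab with h | h
        · rcases min_le_iff.mp h with h' | h'
          · linarith
          · exact Set.mem_singleton_iff.mpr (le_antisymm hy1 (h'.trans hya))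
        · rcases min_le_iff.mp h with h' | h'
          · linarith
          · linarith
      exact le_antisymm ((measure_mono hsub).trans_eq Real.volume_singleton) (zero_le)
    rw [indL1_null measurableSet_Ico hnull]
    exact zero_mem _
  · push_neg at hab
    set a' := max a 0 with ha'
    set b' := min b 1 with hb'
    have h0a : 0 ≤ a' := le_max_right _ _
    have hab' : a' ≤ b' := le_of_lt hab
    have hb1 : b' ≤ 1 := min_le_right _ _
    have ha1 : a' ≤ 1 := hab'.trans hb1
    have h0b : 0 ≤ b' := h0a.trans hab'
    -- reduce to clamped interval
    have hcl : indL1 (Set.Ico a b) = indL1 (Set.Ico a' b') := by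
      apply indL1_congr measurableSet_Ico measurableSet_Ico
      · rw [Measure.restrict_apply (measurableSet_Ico.diff measurableSet_Ico)]
        have hsub : (Set.Ico a b \ Set.Ico a' b') ∩ Set.Icc 0 1 ⊆ ({1} : Set ℝ) := by
          rintro y ⟨⟨⟨hya, hyb⟩, hy⟩, hy0, hy1⟩
          have hya' : a' ≤ y := max_le hya hy0
          have hyb' : b' ≤ y := by
            by_contra hc
            exact hy ⟨hya', lt_of_not_ge hc⟩
          rcases le_or_gt b 1 with h1b | h1b
          · rw [hb', min_eq_left h1b] at hyb'; linarith
          · rw [hb', min_eq_right (le_of_lt h1b)] at hyb'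
            exact Set.mem_singleton_iff.mpr (le_antisymm hy1 hyb')
        exact le_antisymm ((measure_mono hsub).trans_eq Real.volume_singleton) (zero_le)
      · rw [Set.diff_eq_empty.mpr (Set.Ico_subset_Ico (le_max_left _ _) (min_le_left _ _))]
        exact measure_empty
    rw [hcl]
    -- identity: indL1 (Ico a' b') = indL1 (Ico 0 b') - indL1 (Ico 0 a')
    have hid : indL1 (Set.Ico a' b') = indL1 (Set.Ico 0 b') - indL1 (Set.Ico 0 a') := by
      have hu : Set.Ico (0:ℝ) a' ∪ Set.Ico a' b' = Set.Ico 0 b' :=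
        Set.Ico_union_Ico_eq_Ico h0a hab'
      have := indL1_union (s := Set.Ico (0:ℝ) a') (t := Set.Ico a' b')
        measurableSet_Ico measurableSet_Ico
        (by rw [Set.Ico_disjoint_Ico]; exact le_trans (min_le_left _ _) (le_max_right _ _))
      rw [hu] at this
      rw [this]; abel
    rw [hid]
    -- approximation sequence
    set g : ℕ → L1 := fun m =>
      indL1 (Set.Ico 0 ((⌊b' * 2^m⌋₊ : ℝ)/2^m)) - indL1 (Set.Ico 0 ((⌈a' * 2^m⌉₊ : ℝ)/2^m))
      with hg
    have hgmem : ∀ m, g m ∈ Vsub := by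
      intro m
      apply sub_mem
      · apply mem_V_Ico0
        have h1 : b' * 2^m ≤ ((2^m : ℕ) : ℝ) := by
          push_cast
          nlinarith [pow_pos (zero_lt_two (α := ℝ)) m]
        calc ⌊b' * 2^m⌋₊ ≤ ⌊((2^m : ℕ) : ℝ)⌋₊ := Nat.floor_mono h1
          _ = 2^m := Nat.floor_natCast _
      · apply mem_V_Ico0
        rw [Nat.ceil_le]
        push_cast
        nlinarith [pow_pos (zero_lt_two (α := ℝ)) m]
    have hdist : ∀ m : ℕ, ‖(indL1 (Set.Ico 0 b') - indL1 (Set.Ico 0 a')) - g m‖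
        ≤ 2 * ((2:ℝ)^m)⁻¹ := by
      intro m
      have hp : (0:ℝ) < 2^m := by positivity
      have hfl : ((⌊b' * 2^m⌋₊ : ℝ)/2^m) ≤ b' := by
        rw [div_le_iff₀ hp]
        exact Nat.floor_le (by positivity)
      have hfl2 : b' - ((⌊b' * 2^m⌋₊ : ℝ)/2^m) ≤ ((2:ℝ)^m)⁻¹ := by
        have h3 : b' ≤ ((⌊b' * 2^m⌋₊:ℝ)+1)/2^m := by
          rw [le_div_iff₀ hp]
          exact le_of_lt (Nat.lt_floor_add_one _)
        have h4 : ((⌊b' * 2^m⌋₊:ℝ)+1)/2^m - (⌊b' * 2^m⌋₊:ℝ)/2^m = ((2:ℝ)^m)⁻¹ := by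
          field_simp
          ring
        linarith
      have hce : a' ≤ ((⌈a' * 2^m⌉₊ : ℝ)/2^m) := by
        rw [le_div_iff₀ hp]
        exact Nat.le_ceil _
      have hce2 : ((⌈a' * 2^m⌉₊ : ℝ)/2^m) - a' ≤ ((2:ℝ)^m)⁻¹ := by
        have h3 : ((⌈a' * 2^m⌉₊:ℝ)) < a' * 2^m + 1 := Nat.ceil_lt_add_one (by positivity)
        have h4 : ((⌈a' * 2^m⌉₊:ℝ)/2^m) ≤ a' + (2^m)⁻¹ := by
          rw [div_le_iff₀ hp]
          have h5 : (a' + (2^m)⁻¹) * 2^m = a' * 2^m + 1 := by field_simp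
          linarith
        linarith
      have key : (indL1 (Set.Ico 0 b') - indL1 (Set.Ico 0 a')) - g m
          = (indL1 (Set.Ico 0 b') - indL1 (Set.Ico 0 ((⌊b'*2^m⌋₊:ℝ)/2^m)))
            + (indL1 (Set.Ico 0 ((⌈a'*2^m⌉₊:ℝ)/2^m)) - indL1 (Set.Ico 0 a')) := by
        simp only [hg]; abel
      rw [key]
      refine le_trans (norm_add_le _ _) ?_
      have n1 := norm_indL1_Ico0_le hfl
      have n2 := norm_indL1_Ico0_le hce
      linarith
    have hb0 : Tendsto (fun m : ℕ => 2 * ((2:ℝ)^m)⁻¹) atTop (𝓝 0) := by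
      have h1 : Tendsto (fun m : ℕ => ((2:ℝ)⁻¹)^m) atTop (𝓝 0) :=
        tendsto_pow_atTop_nhds_zero_of_lt_one (by norm_num) (by norm_num)
      have h2 : Tendsto (fun m : ℕ => ((2:ℝ)^m)⁻¹) atTop (𝓝 0) := by
        simpa [inv_pow] using h1
      simpa using h2.const_mul 2
    have htend : Tendsto g atTop (𝓝 (indL1 (Set.Ico 0 b') - indL1 (Set.Ico 0 a'))) := by
      rw [tendsto_iff_norm_sub_tendsto_zero]
      apply squeeze_zero (fun m => norm_nonneg _) (fun m => ?_) hb0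
      rw [norm_sub_rev]
      exact hdist m
    exact Vsub_closed.mem_of_tendsto htend (Eventually.of_forall hgmem)

lemma indL1_compl {t : Set ℝ} (ht : MeasurableSet t) :
    indL1 tᶜ = indL1 (Set.Icc 0 1) - indL1 t := by
  apply Lp.ext (μ := μ01)
  filter_upwards [indL1_coeFn ht.compl, indL1_coeFn (measurableSet_Icc (a := (0:ℝ)) (b := 1)),
    indL1_coeFn ht, Lp.coeFn_sub (indL1 (Set.Icc 0 1)) (indL1 t),
    ae_restrict_mem (measurableSet_Icc (a := (0:ℝ)) (b := 1))] with y e1 e2 e3 e4 e5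
  rw [e1, e4, Pi.sub_apply, e2, e3]
  by_cases hy : y ∈ t <;> simp [Set.indicator_apply, hy, e5]

lemma mem_V_ind : ∀ ⦃s : Set ℝ⦄, MeasurableSet s → indL1 s ∈ Vsub := by
  apply MeasurableSpace.induction_on_inter (C := fun s _ => indL1 s ∈ Vsub)
    (BorelSpace.measurable_eq.trans (borel_eq_generateFrom_Ico ℝ))
    (isPiSystem_Ico (id : ℝ → ℝ) id)
  · rw [indL1_empty]; exact zero_mem _
  · rintro t ⟨l, u, _, rfl⟩
    exact mem_V_Ico l u
  · intro t ht hmem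
    rw [indL1_compl ht]
    exact sub_mem mem_V_Icc hmem
  · intro f hdisj hmeas hmem
    set P : ℕ → Set ℝ := fun N => ⋃ i ∈ Finset.range N, f i with hP
    have hPmeas : ∀ N, MeasurableSet (P N) := fun N =>
      Finset.measurableSet_biUnion _ (fun i _ => hmeas i)
    have hPmem : ∀ N, indL1 (P N) ∈ Vsub := by
      intro N
      induction N with
      | zero => simp only [hP, Finset.range_zero, Finset.notMem_empty, Set.iUnion_of_empty,
          Set.iUnion_empty]
                rw [indL1_empty]; exact zero_mem _
      | succ N ih =>
        have he : P (N+1) = P N ∪ f N := by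
          simp only [hP]
          rw [Finset.range_add_one, Finset.set_biUnion_insert]
          exact Set.union_comm _ _
        have hd : Disjoint (P N) (f N) := by
          rw [hP, Set.disjoint_left]
          rintro y hy hyN
          simp only [Set.mem_iUnion, Finset.mem_range] at hy
          obtain ⟨i, hi, hyi⟩ := hy
          exact Set.disjoint_left.mp (hdisj (by omega : i ≠ N)) hyi hyN
        rw [he, indL1_union (hPmeas N) (hmeas N) hd]
        exact add_mem ih (hmem N)
    have hiU : (⋃ N, P N) = ⋃ i, f i := by
      apply subset_antisymm
      · exact Set.iUnion_subset fun N => Set.iUnion₂_subset fun i _ => Set.subset_iUnion f i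
      · intro y hy
        obtain ⟨i, hy⟩ := Set.mem_iUnion.mp hy
        exact Set.mem_iUnion.mpr ⟨i+1, Set.mem_biUnion (Finset.self_mem_range_succ i) hy⟩
    have hmono : Monotone P := by
      intro p q hpq
      apply Set.biUnion_subset_biUnion_left
      intro i hi
      have h' : i ∈ Finset.range p := hi
      exact Finset.mem_coe.mpr (Finset.mem_range.mpr (lt_of_lt_of_le (Finset.mem_range.mp h') hpq))
    have htm : Tendsto (fun N => μ01 ((⋃ i, f i) \ P N)) atTop (𝓝 0) := by
      have h1 : Tendsto (fun N => μ01 ((⋃ i, f i) \ P N)) atTop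
          (𝓝 (μ01 (⋂ N, (⋃ i, f i) \ P N))) := by
        apply tendsto_measure_iInter_atTop
        · exact fun N => ((MeasurableSet.iUnion hmeas).diff (hPmeas N)).nullMeasurableSet
        · intro p q hpq
          exact Set.diff_subset_diff_right (hmono hpq)
        · exact ⟨0, μ01_ne_top _⟩
      have h2 : (⋂ N, (⋃ i, f i) \ P N) = ∅ := by
        rw [← Set.diff_iUnion, hiU, Set.diff_self]
      rwa [h2, measure_empty] at h1
    have htend : Tendsto (fun N => indL1 (P N)) atTop (𝓝 (indL1 (⋃ i, f i))) := by
      rw [tendsto_iff_norm_sub_tendsto_zero]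
      have hbnd : ∀ N, ‖indL1 (P N) - indL1 (⋃ i, f i)‖ ≤ (μ01 ((⋃ i, f i) \ P N)).toReal := by
        intro N
        rw [norm_sub_rev]
        refine le_trans (norm_indL1_sub_le (MeasurableSet.iUnion hmeas) (hPmeas N)) ?_
        have : μ01 (P N \ ⋃ i, f i) = 0 := by
          rw [Set.diff_eq_empty.mpr ?_, measure_empty]
          rw [← hiU]
          exact Set.subset_iUnion P N
        rw [this, add_zero]
      apply squeeze_zero (fun N => norm_nonneg _) hbnd
      have h3 : Tendsto ENNReal.toReal (𝓝 0) (𝓝 0) := by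
        simpa using ENNReal.tendsto_toReal (a := 0) (by simp)
      exact h3.comp htm
    exact Vsub_closed.mem_of_tendsto htend (Eventually.of_forall hPmem)

lemma dense_span_Gset : Dense (Submodule.span ℝ Gset : Set L1) := by
  have hall : ∀ f : L1, f ∈ Vsub := by
    refine Lp.induction (p := 1) ENNReal.one_ne_top (motive := fun f => f ∈ Vsub) ?_ ?_ ?_
    · intro c s hs hμs
      rw [Lp.simpleFunc.coe_indicatorConst]
      have he : indicatorConstLp 1 hs hμs.ne c = c • indL1 s := by
        apply Lp.ext (μ := μ01)
        filter_upwards [indicatorConstLp_coeFn (p := 1) (hs := hs) (hμs := hμs.ne) (c := c),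
          Lp.coeFn_smul c (indL1 s), indL1_coeFn hs] with y e1 e2 e3
        rw [e1, e2, Pi.smul_apply, e3]
        by_cases hy : y ∈ s <;> simp [Set.indicator_apply, hy]
      rw [he]
      exact Submodule.smul_mem _ _ (mem_V_ind hs)
    · intro f g _ _ _ hf hg
      exact add_mem hf hg
    · exact Vsub_closed
  intro f
  have h1 : f ∈ (Vsub : Set L1) := hall f
  rw [Vsub, Submodule.topologicalClosure_coe] at h1
  exact h1

lemma stdHaar_one : stdHaar 1 = indL1 (dyadicI 0 1) := by
  rw [stdHaar, if_pos rfl]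
  exact indL1_Icc_eq

lemma stdHaar_two_pow {n k : ℕ} (h1 : 1 ≤ k) (h2 : k ≤ 2^n) :
    stdHaar (2^n + k)
      = (2^n : ℝ) • (indL1 (dyadicI (n+1) (2*k-1)) - indL1 (dyadicI (n+1) (2*k))) := by
  have hp : 1 ≤ 2^n := Nat.one_le_two_pow
  have hne : 2^n + k ≠ 1 := by omega
  have hlog : Nat.log2 (2^n + k - 1) = n := by
    rw [Nat.log2_eq_log_two]
    apply Nat.log_eq_of_pow_le_of_lt_pow
    · omega
    · have h3 : 2^(n+1) = 2*2^n := by ring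
      omega
  simp only [stdHaar, if_neg hne, hlog]
  rw [Nat.add_sub_cancel_left]

section haar
variable {X : Type*} [NormedAddCommGroup X] [NormedSpace ℝ X]

lemma haar_det (x : ℕ → ℕ → X)
    (htree : ∀ n k, 1 ≤ k → k ≤ 2 ^ n →
      x n k = (2⁻¹ : ℝ) • (x (n+1) (2*k-1) + x (n+1) (2*k)))
    (T' : L1 →L[ℝ] X)
    (h1 : T' (stdHaar 1) = x 0 1)
    (h2 : ∀ n k, 1 ≤ k → k ≤ 2 ^ n →
      T' (stdHaar (2 ^ n + k)) = (2⁻¹ : ℝ) • (x (n+1) (2*k-1) - x (n+1) (2*k))) :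
    ∀ n k, 1 ≤ k → k ≤ 2^n → T' (indL1 (dyadicI n k)) = ((2:ℝ)^n)⁻¹ • x n k := by
  intro n
  induction n with
  | zero =>
    intro k hk1 hk2
    have hk : k = 1 := by omega
    subst hk
    rw [← stdHaar_one, h1]
    norm_num
  | succ n ih =>
    intro k' hk1 hk2
    have hpow : 2^(n+1) = 2*2^n := by ring
    set k := (k'+1)/2 with hk
    have hk1n : 1 ≤ k := by omega
    have hk2n : k ≤ 2^n := by omega
    have hcase : k' = 2*k - 1 ∨ k' = 2*k := by omega
    have hpar : T' (indL1 (dyadicI n k)) = ((2:ℝ)^n)⁻¹ • x n k := ih k hk1n hk2n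
    have hsum : T' (indL1 (dyadicI (n+1) (2*k-1))) + T' (indL1 (dyadicI (n+1) (2*k)))
        = ((2:ℝ)^n)⁻¹ • (2⁻¹:ℝ) • (x (n+1) (2*k-1) + x (n+1) (2*k)) := by
      rw [← map_add, ← indL1_dyadic_split hk1n, hpar, htree n k hk1n hk2n]
    have hdiff : T' (indL1 (dyadicI (n+1) (2*k-1))) - T' (indL1 (dyadicI (n+1) (2*k)))
        = ((2:ℝ)^n)⁻¹ • (2⁻¹:ℝ) • (x (n+1) (2*k-1) - x (n+1) (2*k)) := by
      have h3 := h2 n k hk1n hk2n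
      rw [stdHaar_two_pow hk1n hk2n, _root_.map_smul, map_sub] at h3
      have h4 := congrArg (fun v => ((2:ℝ)^n)⁻¹ • v) h3
      rw [smul_smul, inv_mul_cancel₀ (by positivity : ((2:ℝ)^n) ≠ 0), one_smul] at h4
      rw [h4, smul_smul]
    have hA : T' (indL1 (dyadicI (n+1) (2*k-1))) = ((2:ℝ)^(n+1))⁻¹ • x (n+1) (2*k-1) := by
      have he : T' (indL1 (dyadicI (n+1) (2*k-1)))
          = (2⁻¹:ℝ) • ((T' (indL1 (dyadicI (n+1) (2*k-1))) + T' (indL1 (dyadicI (n+1) (2*k))))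
            + (T' (indL1 (dyadicI (n+1) (2*k-1))) - T' (indL1 (dyadicI (n+1) (2*k))))) := by
        module
      rw [he, hsum, hdiff, pow_succ, mul_inv]
      module
    have hB : T' (indL1 (dyadicI (n+1) (2*k))) = ((2:ℝ)^(n+1))⁻¹ • x (n+1) (2*k) := by
      have he : T' (indL1 (dyadicI (n+1) (2*k)))
          = (2⁻¹:ℝ) • ((T' (indL1 (dyadicI (n+1) (2*k-1))) + T' (indL1 (dyadicI (n+1) (2*k))))
            - (T' (indL1 (dyadicI (n+1) (2*k-1))) - T' (indL1 (dyadicI (n+1) (2*k))))) := by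
        module
      rw [he, hsum, hdiff, pow_succ, mul_inv]
      module
    rcases hcase with h | h
    · rw [h]; exact hA
    · rw [h]; exact hB

end haar

lemma norm_indL1 {s : Set ℝ} (hs : MeasurableSet s) : ‖indL1 s‖ = (μ01 s).toReal := by
  rw [indL1_def hs, norm_indicatorConstLp one_ne_zero ENNReal.one_ne_top]
  norm_num [measureReal_def]

/-- A bounded tree `{x n k}` in `X` corresponds to a unique bounded linear operator
`T : L¹[0,1] → X` with `T h̃_j = d_j` for the difference system `{d_j}`; moreover
`T (2^n 1_{I^n_k}) = x n k` and `‖T‖ = sup_{n,k} ‖x n k‖`. -/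
theorem stmt7 {X : Type*} [NormedAddCommGroup X] [NormedSpace ℝ X] [CompleteSpace X]
    (x : ℕ → ℕ → X)
    (htree : ∀ n k, 1 ≤ k → k ≤ 2 ^ n →
      x n k = (2⁻¹ : ℝ) • (x (n+1) (2*k-1) + x (n+1) (2*k)))
    (M : ℝ) (hM : ∀ n k, 1 ≤ k → k ≤ 2 ^ n → ‖x n k‖ ≤ M) :
    ∃ T : L1 →L[ℝ] X,
      (T (stdHaar 1) = x 0 1 ∧
        ∀ n k, 1 ≤ k → k ≤ 2 ^ n →
          T (stdHaar (2 ^ n + k)) = (2⁻¹ : ℝ) • (x (n+1) (2*k-1) - x (n+1) (2*k))) ∧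
      (∀ T' : L1 →L[ℝ] X,
        (T' (stdHaar 1) = x 0 1 ∧
          ∀ n k, 1 ≤ k → k ≤ 2 ^ n →
            T' (stdHaar (2 ^ n + k)) = (2⁻¹ : ℝ) • (x (n+1) (2*k-1) - x (n+1) (2*k))) →
        T' = T) ∧
      (∀ n k, 1 ≤ k → k ≤ 2 ^ n → T ((2 ^ n : ℝ) • indL1 (dyadicI n k)) = x n k) ∧
      ‖T‖ = ⨆ n : ℕ, ⨆ k ∈ Finset.Icc 1 (2 ^ n), ‖x n k‖ := by
  classical
  have hM0 : 0 ≤ M := le_trans (norm_nonneg (x 0 1)) (hM 0 1 le_rfl (by norm_num))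
  have hbdd : BddAbove (Set.range fun n => ⨆ k ∈ Finset.Icc 1 (2^n), ‖x n k‖) := by
    refine ⟨M, ?_⟩
    rintro _ ⟨n, rfl⟩
    exact Real.iSup_le (fun k => Real.iSup_le
      (fun hk => hM n k (Finset.mem_Icc.mp hk).1 (Finset.mem_Icc.mp hk).2) hM0) hM0
  set S : ℝ := ⨆ n : ℕ, ⨆ k ∈ Finset.Icc 1 (2 ^ n), ‖x n k‖ with hSdef
  have hxS : ∀ n k, 1 ≤ k → k ≤ 2^n → ‖x n k‖ ≤ S := by
    intro n k h1 h2
    have hk : k ∈ Finset.Icc 1 (2^n) := Finset.mem_Icc.mpr ⟨h1, h2⟩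
    have hb2 : BddAbove (Set.range fun j => ⨆ _ : j ∈ Finset.Icc 1 (2^n), ‖x n j‖) := by
      refine ⟨M, ?_⟩
      rintro _ ⟨j, rfl⟩
      exact Real.iSup_le (fun hj => hM n j (Finset.mem_Icc.mp hj).1 (Finset.mem_Icc.mp hj).2) hM0
    have hin : ‖x n k‖ ≤ ⨆ j ∈ Finset.Icc 1 (2^n), ‖x n j‖ := by
      have he : (⨆ _ : k ∈ Finset.Icc 1 (2^n), ‖x n k‖) = ‖x n k‖ :=
        ciSup_pos (f := fun _ => ‖x n k‖) hk
      exact le_trans he.symm.le (le_ciSup hb2 k)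
    exact le_trans hin (le_ciSup hbdd n)
  have hS0 : 0 ≤ S := le_trans (norm_nonneg _) (hxS 0 1 le_rfl (by norm_num))
  have hb : ∀ n (f : L1), ‖Tn x n f‖ ≤ S * ‖f‖ :=
    fun n f => Tn_bound x n S (fun k hk1 hk2 => hxS n k hk1 hk2) f
  have hev : ∀ g ∈ Submodule.span ℝ Gset, ∃ N, ∀ p q, N ≤ p → N ≤ q → Tn x p g = Tn x q g := by
    intro g hg
    induction hg using Submodule.span_induction with
    | mem g hgen =>
      obtain ⟨n, k, h1, h2, rfl⟩ := hgen
      refine ⟨n, fun p q hp hq => ?_⟩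
      obtain ⟨d1, rfl⟩ := Nat.exists_eq_add_of_le hp
      obtain ⟨d2, rfl⟩ := Nat.exists_eq_add_of_le hq
      rw [Tn_ind x htree d1 n k h1 h2, Tn_ind x htree d2 n k h1 h2]
    | zero => exact ⟨0, fun p q _ _ => by simp⟩
    | add a b _ _ iha ihb =>
      obtain ⟨Na, hNa⟩ := iha
      obtain ⟨Nb, hNb⟩ := ihb
      refine ⟨max Na Nb, fun p q hp hq => ?_⟩
      simp only [map_add,
        hNa p q (le_trans (le_max_left _ _) hp) (le_trans (le_max_left _ _) hq),
        hNb p q (le_trans (le_max_right _ _) hp) (le_trans (le_max_right _ _) hq)]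
    | smul c a _ ih =>
      obtain ⟨N, hN⟩ := ih
      refine ⟨N, fun p q hp hq => ?_⟩
      rw [(Tn x p).map_smul, (Tn x q).map_smul, hN p q hp hq]
  have hcauchy : ∀ f : L1, CauchySeq (fun n => Tn x n f) := by
    intro f
    rw [Metric.cauchySeq_iff]
    intro ε hε
    obtain ⟨g, hg_mem, hg_close⟩ : ∃ g ∈ Submodule.span ℝ Gset, ‖f - g‖ < ε / (2*S+2) := by
      obtain ⟨g, hgs, hd⟩ := Metric.mem_closure_iff.mp (dense_span_Gset f) (ε/(2*S+2))
        (by positivity)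
      exact ⟨g, hgs, by rwa [dist_eq_norm] at hd⟩
    obtain ⟨N, hN⟩ := hev g hg_mem
    refine ⟨N, fun p hp q hq => ?_⟩
    rw [dist_eq_norm]
    have key : Tn x p f - Tn x q f = Tn x p (f - g) - Tn x q (f - g) := by
      rw [map_sub, map_sub, hN p q hp hq]
      abel
    rw [key]
    calc ‖Tn x p (f-g) - Tn x q (f-g)‖ ≤ ‖Tn x p (f-g)‖ + ‖Tn x q (f-g)‖ := norm_sub_le _ _
      _ ≤ S * ‖f-g‖ + S * ‖f-g‖ := add_le_add (hb p _) (hb q _)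
      _ < ε := by
          have h6 : ‖f-g‖ * (2*S+2) < ε := (lt_div_iff₀ (by positivity)).mp hg_close
          nlinarith [norm_nonneg (f-g)]
  have hlimex : ∀ f : L1, ∃ L, Tendsto (fun n => Tn x n f) atTop (𝓝 L) :=
    fun f => cauchySeq_tendsto_of_complete (hcauchy f)
  choose F hF using hlimex
  have hFadd : ∀ f g, F (f+g) = F f + F g := fun f g =>
    tendsto_nhds_unique (hF (f+g)) (((hF f).add (hF g)).congr (fun n => (map_add (Tn x n) f g).symm))
  have hFsmul : ∀ (c : ℝ) f, F (c • f) = c • F f := fun c f =>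
    tendsto_nhds_unique (hF (c • f))
      (((hF f).const_smul c).congr (fun n => ((Tn x n).map_smul c f).symm))
  have hFbound : ∀ f, ‖F f‖ ≤ S * ‖f‖ := fun f =>
    le_of_tendsto (hF f).norm (Eventually.of_forall (fun n => hb n f))
  set T : L1 →L[ℝ] X := LinearMap.mkContinuous
    { toFun := F, map_add' := hFadd, map_smul' := hFsmul } S hFbound with hT
  have hTapp : ∀ f, T f = F f := fun f => rfl
  have hTind : ∀ m j, 1 ≤ j → j ≤ 2^m → T (indL1 (dyadicI m j)) = ((2:ℝ)^m)⁻¹ • x m j := by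
    intro m j h1 h2
    rw [hTapp]
    refine tendsto_nhds_unique (hF _) ?_
    have hcon : (fun n => Tn x n (indL1 (dyadicI m j)))
        =ᶠ[atTop] (fun _ => ((2:ℝ)^m)⁻¹ • x m j) := by
      filter_upwards [eventually_ge_atTop m] with n hn
      obtain ⟨d, rfl⟩ := Nat.exists_eq_add_of_le hn
      exact Tn_ind x htree d m j h1 h2
    exact Tendsto.congr' hcon.symm tendsto_const_nhds
  have hT2 : ∀ n k, 1 ≤ k → k ≤ 2^n → T ((2^n : ℝ) • indL1 (dyadicI n k)) = x n k := by
    intro n k h1 h2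
    rw [T.map_smul, hTind n k h1 h2, smul_smul,
      mul_inv_cancel₀ (by positivity : ((2:ℝ)^n) ≠ 0), one_smul]
  have hTh1 : T (stdHaar 1) = x 0 1 := by
    rw [stdHaar_one, hTind 0 1 le_rfl (by norm_num)]
    norm_num
  have hTh2 : ∀ n k, 1 ≤ k → k ≤ 2^n →
      T (stdHaar (2^n+k)) = (2⁻¹:ℝ) • (x (n+1) (2*k-1) - x (n+1) (2*k)) := by
    intro n k h1 h2
    have hpow : 2^(n+1) = 2*2^n := by ring
    rw [stdHaar_two_pow h1 h2, T.map_smul, map_sub,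
      hTind (n+1) (2*k-1) (by omega) (by omega), hTind (n+1) (2*k) (by omega) (by omega)]
    have hc : (2:ℝ)^n * ((2:ℝ)^(n+1))⁻¹ = 2⁻¹ := by
      rw [pow_succ, mul_inv, ← mul_assoc,
        mul_inv_cancel₀ (by positivity : ((2:ℝ)^n) ≠ 0), one_mul]
    rw [smul_sub, smul_smul, smul_smul, hc, ← smul_sub]
  have hnorm_le : ‖T‖ ≤ S := LinearMap.mkContinuous_norm_le _ hS0 _
  have hnorm_ge : S ≤ ‖T‖ := by
    apply ciSup_le
    intro n
    apply Real.iSup_le ?_ (norm_nonneg T)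
    intro k
    apply Real.iSup_le ?_ (norm_nonneg T)
    intro hk
    obtain ⟨h1, h2⟩ := Finset.mem_Icc.mp hk
    have hnrm : ‖(2^n : ℝ) • indL1 (dyadicI n k)‖ = 1 := by
      rw [norm_smul, norm_indL1 (dyadicI_meas n k), μ01_dyadicI h1 h2,
        ENNReal.toReal_ofReal (by positivity)]
      rw [Real.norm_eq_abs, abs_of_pos (by positivity)]
      exact mul_inv_cancel₀ (by positivity)
    calc ‖x n k‖ = ‖T ((2^n:ℝ) • indL1 (dyadicI n k))‖ := by rw [hT2 n k h1 h2]
      _ ≤ ‖T‖ * 1 := by rw [← hnrm]; exact T.le_opNorm _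
      _ = ‖T‖ := mul_one _
  refine ⟨T, ⟨hTh1, hTh2⟩, ?_, hT2, le_antisymm hnorm_le hnorm_ge⟩
  rintro T' ⟨h1', h2'⟩
  apply ContinuousLinearMap.ext_on dense_span_Gset
  rintro f ⟨n, k, hk1, hk2, rfl⟩
  rw [haar_det x htree T' h1' h2' n k hk1 hk2, hTind n k hk1 hk2]
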